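/- Let β₀ ≥ 0, ρ > 0, r > 0, ξ̄ ≥ 0, and let f : ℝ → ℝ be continuous, bounded by β₀ in the sense that |f(x)| ≤ β₀|x| and, more strongly, suppose f(x) = β(x)x with β continuous, nonnegative, decreasing, and β(x) ≤ β(0) =: β₀. Any nonnegative solution x(t) of the delay differential equation x'(t) = −(ρ + β(x(t)))x(t) + 2ξ̄ β(x(t−r))x(t−r) for t ≥ r, with continuous nonnegative initial data on [0,r], is bounded on [0,∞). -/

import Mathlib

open Set Real Filter Topology

/-- boundedness of solutions when ρ > 0: every nonnegative solution of
`x'(t) = −(ρ + β(x t)) x t + 2 ξ̄ β(x (t−r)) x (t−r)` for `t ≥ r`, with continuous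
nonnegative initial data, is bounded on `[0,∞)`. -/
theorem delay_equation_bounded
    (β : ℝ → ℝ)
    (hβcont : ContinuousOn β (Ici 0))
    (hβpos : ∀ z ∈ Ici (0:ℝ), 0 < β z)
    (hβanti : AntitoneOn β (Ici 0))
    (hβlim : Tendsto β atTop (nhds 0))
    (ρ r ξ : ℝ) (hρ : 0 < ρ) (hr : 0 < r) (hξ : 0 ≤ ξ)
    (x : ℝ → ℝ)
    (hxcont : ContinuousOn x (Ici 0))
    (hxnonneg : ∀ t ≥ (0:ℝ), 0 ≤ x t)
    (hdde : ∀ t ≥ r, HasDerivAt x (-(ρ + β (x t)) * x t + 2 * ξ * β (x (t - r)) * x (t - r)) t) :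
    ∃ M : ℝ, ∀ t ≥ (0:ℝ), x t ≤ M := by
  have hβ0 : 0 < β 0 := hβpos 0 (mem_Ici.mpr le_rfl)
  set e : ℝ := ρ / (2 * (2 * ξ + 1)) with he_def
  have he_pos : 0 < e := by positivity
  have he_mul : e * (2 * (2 * ξ + 1)) = ρ := div_mul_cancel₀ _ (by positivity)
  obtain ⟨K₀, hK₀⟩ := eventually_atTop.mp (hβlim.eventually_lt_const he_pos)
  set K : ℝ := max K₀ 0 with hK_def
  have hK0 : 0 ≤ K := le_max_right _ _
  have hβK : β K < e := hK₀ K (le_max_left _ _)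
  have hβKρ : 2 * ξ * β K ≤ ρ / 2 := by
    nlinarith [mul_le_mul_of_nonneg_left hβK.le (by positivity : (0:ℝ) ≤ 2 * ξ),
      he_pos.le]
  set A : ℝ := 2 * ξ * β 0 * K with hA_def
  have hA0 : 0 ≤ A := by positivity
  have hkey : ∀ z m, 0 ≤ z → z ≤ m → 2 * ξ * β z * z ≤ A + ρ / 2 * m := by
    intro z m hz hzm
    have hβz0 : 0 < β z := hβpos z (mem_Ici.mpr hz)
    have hm : 0 ≤ m := le_trans hz hzm
    have hhalf : 0 ≤ ρ / 2 * m := by positivity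
    rcases le_or_gt z K with h | h
    · have hβ : β z ≤ β 0 := hβanti (mem_Ici.mpr le_rfl) hz hz
      have a1 : 2 * ξ * β z ≤ 2 * ξ * β 0 :=
        mul_le_mul_of_nonneg_left hβ (by positivity)
      have a2 : 2 * ξ * β z * z ≤ 2 * ξ * β 0 * z :=
        mul_le_mul_of_nonneg_right a1 hz
      have a3 : 2 * ξ * β 0 * z ≤ 2 * ξ * β 0 * K :=
        mul_le_mul_of_nonneg_left h (by positivity)
      simp only [hA_def]
      linarith
    · have hβ : β z ≤ β K := hβanti hK0 hz h.le
      have a1 : 2 * ξ * β z ≤ ρ / 2 :=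
        le_trans (mul_le_mul_of_nonneg_left hβ (by positivity)) hβKρ
      have a2 : 2 * ξ * β z * z ≤ ρ / 2 * z :=
        mul_le_mul_of_nonneg_right a1 hz
      have a3 : ρ / 2 * z ≤ ρ / 2 * m := mul_le_mul_of_nonneg_left hzm (by positivity)
      linarith
  obtain ⟨t₁, ht₁mem, ht₁max⟩ := isCompact_Icc.exists_isMaxOn
    (nonempty_Icc.mpr hr.le) (hxcont.mono Icc_subset_Ici_self)
  set M₀ : ℝ := max (x t₁) (2 * A / ρ) with hM₀_def
  set M : ℝ := M₀ + 1 with hM_def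
  have hxt₁ : 0 ≤ x t₁ := hxnonneg t₁ ht₁mem.1
  have hM₀A : 2 * A ≤ ρ * M₀ := by
    have h := le_max_right (x t₁) (2 * A / ρ)
    rw [div_le_iff₀ hρ] at h
    simp only [hM₀_def]
    linarith [le_max_right (x t₁) (2 * A / ρ)]
  have hM₀0 : 0 ≤ M₀ := le_trans hxt₁ (le_max_left _ _)
  refine ⟨M, ?_⟩
  by_contra hcon
  push_neg at hcon
  obtain ⟨t₂, ht₂0, ht₂⟩ := hcon
  set S : Set ℝ := {t | 0 ≤ t ∧ M < x t} with hS_def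
  have hS_ne : S.Nonempty := ⟨t₂, ht₂0, ht₂⟩
  have hS_bdd : BddBelow S := ⟨0, fun t ht => ht.1⟩
  set t₀ : ℝ := sInf S with ht₀_def
  have hSr : ∀ t ∈ S, r ≤ t := by
    intro t ht
    by_contra hlt
    push_neg at hlt
    have h1 : x t ≤ x t₁ := ht₁max ⟨ht.1, hlt.le⟩
    have h2 : x t ≤ M₀ := le_trans h1 (le_max_left _ _)
    have h3 := ht.2
    rw [hM_def] at h3
    linarith
  have ht₀r : r ≤ t₀ := le_csInf hS_ne hSr
  have ht₀0 : 0 ≤ t₀ := le_trans hr.le ht₀r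
  have ht₀pos : 0 < t₀ := lt_of_lt_of_le hr ht₀r
  have hnotS : ∀ t, 0 ≤ t → t < t₀ → x t ≤ M := by
    intro t ht0 htlt
    by_contra h
    push_neg at h
    exact absurd (csInf_le hS_bdd ⟨ht0, h⟩) (not_le.mpr htlt)
  have hcw : ContinuousWithinAt x (Ici 0) t₀ := hxcont t₀ ht₀0
  have hxt₀le : x t₀ ≤ M := by
    have hcl : t₀ ∈ closure (Ico 0 t₀) := by
      rw [closure_Ico (ne_of_lt ht₀pos)]
      exact ⟨ht₀0, le_rfl⟩
    have hnb : (𝓝[Ico 0 t₀] t₀).NeBot := mem_closure_iff_nhdsWithin_neBot.mp hcl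
    have htend : Tendsto x (𝓝[Ico 0 t₀] t₀) (𝓝 (x t₀)) :=
      hcw.mono (fun t ht => ht.1)
    exact le_of_tendsto htend (eventually_mem_nhdsWithin.mono
      (fun t ht => hnotS t ht.1 ht.2))
  have hxt₀ge : M ≤ x t₀ := by
    have hcl : t₀ ∈ closure S := csInf_mem_closure hS_ne hS_bdd
    have hnb : (𝓝[S] t₀).NeBot := mem_closure_iff_nhdsWithin_neBot.mp hcl
    have htend : Tendsto x (𝓝[S] t₀) (𝓝 (x t₀)) :=
      hcw.mono (fun t ht => ht.1)
    exact ge_of_tendsto htend (eventually_mem_nhdsWithin.mono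
      (fun t ht => ht.2.le))
  have hxt₀ : x t₀ = M := le_antisymm hxt₀le hxt₀ge
  have hd := hdde t₀ ht₀r
  set z : ℝ := x (t₀ - r) with hz_def
  have hz0 : 0 ≤ z := hxnonneg _ (by linarith)
  have hzM : z ≤ M := hnotS _ (by linarith) (by linarith)
  have hβM : 0 < β (x t₀) := hβpos _ (mem_Ici.mpr (hxnonneg _ ht₀0))
  have hM0 : 0 < M := by rw [hM_def]; linarith
  have hd_neg : -(ρ + β (x t₀)) * x t₀ + 2 * ξ * β z * z < 0 := by
    have h1 := hkey z M hz0 hzM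
    rw [hxt₀] at hβM ⊢
    nlinarith [mul_pos hβM hM0]
  have hslope : Tendsto (slope x t₀) (𝓝[>] t₀)
      (𝓝 (-(ρ + β (x t₀)) * x t₀ + 2 * ξ * β z * z)) := by
    refine (hasDerivAt_iff_tendsto_slope.mp hd).mono_left (nhdsWithin_mono _ ?_)
    exact fun t ht => ne_of_gt ht
  have hev : ∀ᶠ t in 𝓝[>] t₀, slope x t₀ t < 0 := hslope.eventually_lt_const hd_neg
  obtain ⟨u, hu, huev⟩ := mem_nhdsGT_iff_exists_Ioo_subset.mp hev
  obtain ⟨s, hsS, hsu⟩ := exists_lt_of_csInf_lt hS_ne (show sInf S < u from hu)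
  have hst₀ : t₀ < s := by
    rcases lt_or_eq_of_le (csInf_le hS_bdd hsS) with h | h
    · exact h
    · exfalso
      have := hsS.2
      rw [← h, hxt₀] at this
      exact lt_irrefl M this
  have hslope_s : slope x t₀ s < 0 := huev ⟨hst₀, hsu⟩
  rw [slope_def_field] at hslope_s
  have hxs : x s - x t₀ < 0 := by
    have hpos : 0 < s - t₀ := by linarith
    have hmul := mul_lt_mul_of_pos_right hslope_s hpos
    rwa [div_mul_cancel₀ _ (ne_of_gt hpos), zero_mul] at hmul
  rw [hxt₀] at hxs
  linarith [hsS.2]
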